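/- Under the interference-alignment hypotheses, k(r−1) + 1 ≤ l²; equivalently, k ≤ (l² − 1)/(r − 1). -/
import Mathlib


theorem stmt_4 {𝔽 : Type*} [Field 𝔽] (k r l : ℕ)
    (hk : 0 < k) (hr : 2 ≤ r) (hl : 0 < l) (hrl : r ∣ l)
    (S : Fin k → Matrix (Fin (l / r)) (Fin l) 𝔽)
    (C : Fin r → Fin k → Matrix (Fin l) (Fin l) 𝔽)
    (hCinv : ∀ u j, IsUnit (C u j))
    (hC1 : ∀ j, C ⟨0, by omega⟩ j = 1)
    (hIA1 : ∀ (i j : Fin k), j ≠ i → ∀ u : Fin r,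
      Submodule.span 𝔽 (Set.range (S i * C u j)) = Submodule.span 𝔽 (Set.range (S i)))
    (hIA2 : ∀ i : Fin k, iSupIndep
      fun u : Fin r => Submodule.span 𝔽 (Set.range (S i * C u i)))
    (hIA3 : ∀ i : Fin k,
      (⨆ u : Fin r, Submodule.span 𝔽 (Set.range (S i * C u i))) = ⊤)
    :
    k * (r - 1) + 1 ≤ l ^ 2 ∧ k ≤ (l ^ 2 - 1) / (r - 1) := by
  classical
  have hr0 : (0:ℕ) < r := by omega
  -- the zero index of Fin r
  set u0fin : Fin r := ⟨0, hr0⟩ with hu0fin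
  -- S j is nonzero
  have hSne : ∀ j : Fin k, S j ≠ 0 := by
    intro j hS0
    have h3 := hIA3 j
    have hb : ∀ u : Fin r, Submodule.span 𝔽 (Set.range (S j * C u j)) = ⊥ := by
      intro u
      rw [hS0, Matrix.zero_mul, Submodule.span_eq_bot]
      rintro x ⟨m, rfl⟩
      rfl
    simp only [hb, iSup_bot] at h3
    haveI : Nonempty (Fin l) := ⟨⟨0, hl⟩⟩
    exact absurd h3 bot_ne_top
  -- S j * C u j is nonzero
  have hSCne : ∀ (j : Fin k) (u : Fin r), S j * C u j ≠ 0 := by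
    intro j u h0
    apply hSne j
    letI := (hCinv u j).invertible
    calc S j = S j * (C u j * ⅟(C u j)) := by rw [mul_invOf_self, Matrix.mul_one]
    _ = (S j * C u j) * ⅟(C u j) := by rw [Matrix.mul_assoc]
    _ = 0 := by rw [h0, Matrix.zero_mul]
  -- the family of matrices
  set f : Option (Fin k × Fin (r-1)) → Matrix (Fin l) (Fin l) 𝔽 :=
    fun x => match x with
    | none => 1
    | some (i, u) => C ⟨u.val + 1, by have := u.isLt; omega⟩ i with hf
  have hli : LinearIndependent 𝔽 f := by
    rw [Fintype.linearIndependent_iff]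
    intro g hg
    have hgsome : ∀ (j : Fin k) (u0 : Fin (r-1)), g (some (j, u0)) = 0 := by
      intro j u0
      set u : Fin r := ⟨u0.val + 1, by have := u0.isLt; omega⟩ with hu
      set V : Fin r → Submodule 𝔽 (Fin l → 𝔽) :=
        fun v => Submodule.span 𝔽 (Set.range (S j * C v j)) with hV
      have hV0 : V u0fin = Submodule.span 𝔽 (Set.range (S j)) := by
        show Submodule.span 𝔽 (Set.range (S j * C u0fin j)) = _
        rw [hC1 j, Matrix.mul_one]
      -- multiply the dependency by S j on the left
      have hgS : ∑ x, g x • (S j * f x) = 0 := by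
        calc ∑ x, g x • (S j * f x) = S j * (∑ x, g x • f x) := by
              rw [Matrix.mul_sum]
              congr 1
              funext x
              rw [Matrix.mul_smul]
        _ = 0 := by rw [hg, Matrix.mul_zero]
      -- rows
      have hrow : ∀ m : Fin (l/r), ∑ x, g x • ((S j * f x) m) = (0 : Fin l → 𝔽) := by
        intro m
        funext n
        have h := congrFun (congrFun hgS m) n
        simpa [Matrix.sum_apply, Finset.sum_apply, Pi.smul_apply] using h
      set K : Submodule 𝔽 (Fin l → 𝔽) := ⨆ (v) (_ : v ≠ u), V v with hK
      have hdisj : Disjoint (V u) K := hIA2 j u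
      have hu0ne : u0fin ≠ u := by
        intro h
        have := congrArg Fin.val h
        simp [hu0fin, hu] at this
      have hzero : ∀ m : Fin (l/r), g (some (j, u0)) • ((S j * C u j) m) = 0 := by
        intro m
        set x₀ : Option (Fin k × Fin (r-1)) := some (j, u0) with hx₀
        have hadd := Finset.add_sum_erase Finset.univ
          (fun x => g x • ((S j * f x) m)) (Finset.mem_univ x₀)
        rw [hrow m] at hadd
        have heq : g x₀ • ((S j * f x₀) m)
            = - ∑ x ∈ Finset.univ.erase x₀, g x • ((S j * f x) m) :=
          eq_neg_of_add_eq_zero_left hadd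
        have hmem2 : g x₀ • ((S j * f x₀) m) ∈ K := by
          rw [heq]
          refine neg_mem (Submodule.sum_mem _ ?_)
          intro x hx
          have hxne : x ≠ x₀ := (Finset.mem_erase.mp hx).1
          match x with
          | none =>
            apply Submodule.mem_iSup_of_mem u0fin
            apply Submodule.mem_iSup_of_mem hu0ne
            rw [hV0]
            show g none • ((S j * (1:Matrix (Fin l) (Fin l) 𝔽)) m) ∈ _
            rw [Matrix.mul_one]
            exact Submodule.smul_mem _ _ (Submodule.subset_span ⟨m, rfl⟩)
          | some (i, u1) =>
            by_cases hij : i = j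
            · subst hij
              have hu1 : u1 ≠ u0 := by
                intro h; exact hxne (by rw [h])
              set u' : Fin r := ⟨u1.val + 1, by have := u1.isLt; omega⟩ with hu'
              have hu'ne : u' ≠ u := by
                intro h
                have := congrArg Fin.val h
                simp [hu', hu] at this
                exact hu1 (Fin.ext this)
              apply Submodule.mem_iSup_of_mem u'
              apply Submodule.mem_iSup_of_mem hu'ne
              exact Submodule.smul_mem _ _ (Submodule.subset_span ⟨m, rfl⟩)
            · apply Submodule.mem_iSup_of_mem u0fin
              apply Submodule.mem_iSup_of_mem hu0ne
              rw [hV0, ← hIA1 j i hij ⟨u1.val + 1, by have := u1.isLt; omega⟩]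
              exact Submodule.smul_mem _ _ (Submodule.subset_span ⟨m, rfl⟩)
        have hmem1 : g x₀ • ((S j * f x₀) m) ∈ V u := by
          exact Submodule.smul_mem _ _ (Submodule.subset_span ⟨m, rfl⟩)
        exact Submodule.disjoint_def.mp hdisj _ hmem1 hmem2
      -- conclude g (some (j,u0)) = 0
      have hmat : g (some (j, u0)) • (S j * C u j) = 0 := by
        funext m n
        have := congrFun (hzero m) n
        simpa [Pi.smul_apply] using this
      rcases smul_eq_zero.mp hmat with h | h
      · exact h
      · exact absurd h (hSCne j u)
    -- now g none = 0
    have hsome' : ∀ y : Fin k × Fin (r-1), g (some y) = 0 := fun ⟨a, b⟩ => hgsome a b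
    rw [Fintype.sum_option] at hg
    simp only [hsome', zero_smul, Finset.sum_const_zero, add_zero] at hg
    have hf1 : f none = 1 := rfl
    rw [hf1] at hg
    have hnone : g none = 0 := by
      have := congrFun (congrFun hg ⟨0, hl⟩) ⟨0, hl⟩
      simpa [Matrix.one_apply] using this
    intro x
    match x with
    | none => exact hnone
    | some y => exact hsome' y
  -- counting
  have hcard := hli.fintype_card_le_finrank
  rw [Module.finrank_matrix] at hcard
  simp only [Fintype.card_option, Fintype.card_prod, Fintype.card_fin,
    Module.finrank_self, mul_one] at hcard
  have key : k * (r - 1) + 1 ≤ l ^ 2 := by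
    have : l * l = l ^ 2 := by ring
    omega
  refine ⟨key, ?_⟩
  rw [Nat.le_div_iff_mul_le (by omega : 0 < r - 1)]
  omega
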